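/- arXiv:2405.15173 — 2 statements merged into one kernel-verified Lean document; each statement's English description precedes it below -/
import Mathlib

section
/- There exist a finite probability space (Ω, μ) and random variables X : Ω → Fin 4, I : Ω → Bool, Y : Ω → Bool, and a classifier Ŷ : Ω → Bool such that (i) Ŷ is a perfect classifier in the sense that for every value x of X with μ(X = x) > 0 and every y, the conditional probabilities satisfy P(Ŷ = y | X = x) = P(Y = y | X = x), and yet (ii) demographic parity fails: there exist y, i₁, i₂ with P(Ŷ = y | I = i₁) ≠ P(Ŷ = y | I = i₂). In other words, when X is entangled with the attribute I and the label Y, using a perfect classifier for Ŷ does not imply demographic parity. -/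
open Classical in
/-- Probability of an event `p` under a probability mass function `μ`
on a finite sample space `Ω`. -/
noncomputable def prob {Ω : Type*} [Fintype Ω] (μ : Ω → ℝ) (p : Ω → Prop) : ℝ :=
  ∑ ω, if p ω then μ ω else 0

/-- Conditional probability `P(p | q) = μ(p ∧ q) / μ(q)`. -/
noncomputable def condProb {Ω : Type*} [Fintype Ω] (μ : Ω → ℝ) (p q : Ω → Prop) : ℝ :=
  prob μ (fun ω => p ω ∧ q ω) / prob μ q

/-- Theorem 1 (Locatello et al.): there is a finite probability space `(Ω, μ)`
(with `Ω = Fin n`) and random variables `X : Ω → Fin 4`, `I Y Ŷ : Ω → Bool`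
such that `Ŷ` is a perfect classifier for `Y` given `X`, i.e.
`P(Ŷ = y | X = x) = P(Y = y | X = x)` for all `y` and all `x` of positive
probability, yet demographic parity with respect to `I` fails: there are
`y, i₁, i₂` with `P(Ŷ = y | I = i₁) ≠ P(Ŷ = y | I = i₂)`. -/
theorem perfect_classifier_not_imp_demographic_parity :
    ∃ (n : ℕ) (μ : Fin n → ℝ)
      (X : Fin n → Fin 4) (I : Fin n → Bool) (Y : Fin n → Bool) (Yhat : Fin n → Bool),
      (∀ ω, 0 ≤ μ ω) ∧ (∑ ω, μ ω) = 1 ∧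
      (∀ (x : Fin 4) (y : Bool), 0 < prob μ (fun ω => X ω = x) →
        condProb μ (fun ω => Yhat ω = y) (fun ω => X ω = x)
          = condProb μ (fun ω => Y ω = y) (fun ω => X ω = x)) ∧
      (∃ (y i₁ i₂ : Bool),
        condProb μ (fun ω => Yhat ω = y) (fun ω => I ω = i₁)
          ≠ condProb μ (fun ω => Yhat ω = y) (fun ω => I ω = i₂)) := by
  refine ⟨2, fun _ => 1/2, fun ω => if ω = 0 then 0 else 1,
    fun ω => ω = 1, fun ω => ω = 1, fun ω => ω = 1, ?_, ?_, ?_, ?_⟩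
  · intro ω; norm_num
  · simp [Fin.sum_univ_two]
  · intro x y _; rfl
  · refine ⟨true, true, false, ?_⟩
    simp [condProb, prob, Fin.sum_univ_two]
end

section
/- Let (Ω, μ) be a finite probability space, X : Ω → α a random variable with finite codomain, f : α → Bool, and set Y := f ∘ X and Ŷ := f ∘ X. Then Ŷ is a perfect classifier for Y (indeed P(Ŷ = y | X = x) = P(Y = y | X = x) for all y and all x with μ(X = x) > 0), and for an attribute I : Ω → β with finite codomain, demographic parity of Ŷ with respect to I — i.e., P(Ŷ = y | I = i₁) = P(Ŷ = y | I = i₂) for all y and all i₁, i₂ with μ(I = i₁) > 0 and μ(I = i₂) > 0 — holds if and only if Y is independent of I, i.e., μ(Y = y ∧ I = i) = μ(Y = y) · μ(I = i) for all y and i. Consequently, whenever the label Y is determined by the entangled input X and Y is not independent of the attribute I, the perfect classifier Ŷ violates demographic parity. -/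
open Classical in
lemma prob_nonneg' {Ω : Type*} [Fintype Ω] (μ : Ω → ℝ) (hμ0 : ∀ ω, 0 ≤ μ ω)
    (p : Ω → Prop) : 0 ≤ prob μ p := by
  apply Finset.sum_nonneg; intro ω _
  by_cases h : p ω <;> simp [h, hμ0 ω]

open Classical in
lemma prob_and_le' {Ω : Type*} [Fintype Ω] (μ : Ω → ℝ) (hμ0 : ∀ ω, 0 ≤ μ ω)
    (p q : Ω → Prop) : prob μ (fun ω => p ω ∧ q ω) ≤ prob μ q := by
  apply Finset.sum_le_sum; intro ω _
  by_cases hp : p ω <;> by_cases hq : q ω <;> simp [hp, hq, hμ0 ω]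

open Classical in
lemma prob_fiber' {Ω β : Type*} [Fintype Ω] [Fintype β] (μ : Ω → ℝ)
    (p : Ω → Prop) (I : Ω → β) :
    ∑ i : β, prob μ (fun ω => p ω ∧ I ω = i) = prob μ p := by
  unfold prob
  rw [Finset.sum_comm]
  refine Finset.sum_congr rfl fun ω _ => ?_
  by_cases h : p ω <;> simp [h]

/-- If `Y = f ∘ X` and `Ŷ = f ∘ X`, then `Ŷ` is a perfect classifier for `Y`,
and demographic parity of `Ŷ` with respect to an attribute `I` holds iff `Y`
is independent of `I`.  Consequently, whenever `Y` is determined by the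
entangled input `X` and `Y` is not independent of `I`, the perfect classifier
`Ŷ` violates demographic parity. -/
theorem perfect_classifier_parity_iff_indep
    {Ω α β : Type*} [Fintype Ω] [Fintype α] [Fintype β]
    (μ : Ω → ℝ) (hμ0 : ∀ ω, 0 ≤ μ ω) (hμ1 : (∑ ω, μ ω) = 1)
    (X : Ω → α) (f : α → Bool) (I : Ω → β)
    (Y : Ω → Bool) (Yhat : Ω → Bool)
    (hY : Y = f ∘ X) (hYhat : Yhat = f ∘ X) :
    (∀ (y : Bool) (x : α), 0 < prob μ (fun ω => X ω = x) →
      condProb μ (fun ω => Yhat ω = y) (fun ω => X ω = x)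
        = condProb μ (fun ω => Y ω = y) (fun ω => X ω = x)) ∧
    ((∀ (y : Bool) (i₁ i₂ : β),
        0 < prob μ (fun ω => I ω = i₁) → 0 < prob μ (fun ω => I ω = i₂) →
        condProb μ (fun ω => Yhat ω = y) (fun ω => I ω = i₁)
          = condProb μ (fun ω => Yhat ω = y) (fun ω => I ω = i₂))
      ↔ (∀ (y : Bool) (i : β),
          prob μ (fun ω => Y ω = y ∧ I ω = i)
            = prob μ (fun ω => Y ω = y) * prob μ (fun ω => I ω = i))) ∧
    ((¬ (∀ (y : Bool) (i : β),
          prob μ (fun ω => Y ω = y ∧ I ω = i)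
            = prob μ (fun ω => Y ω = y) * prob μ (fun ω => I ω = i))) →
      ∃ (y : Bool) (i₁ i₂ : β),
        0 < prob μ (fun ω => I ω = i₁) ∧ 0 < prob μ (fun ω => I ω = i₂) ∧
        condProb μ (fun ω => Yhat ω = y) (fun ω => I ω = i₁)
          ≠ condProb μ (fun ω => Yhat ω = y) (fun ω => I ω = i₂)) := by
  subst hY hYhat
  have hnn := prob_nonneg' μ hμ0
  have hIsum : ∑ i : β, prob μ (fun ω => I ω = i) = 1 := by
    have h := prob_fiber' μ (fun _ => True) I
    simp only [true_and] at h
    simpa [prob, hμ1] using h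
  have key : (∀ (y : Bool) (i₁ i₂ : β),
        0 < prob μ (fun ω => I ω = i₁) → 0 < prob μ (fun ω => I ω = i₂) →
        condProb μ (fun ω => (f ∘ X) ω = y) (fun ω => I ω = i₁)
          = condProb μ (fun ω => (f ∘ X) ω = y) (fun ω => I ω = i₂))
      ↔ (∀ (y : Bool) (i : β),
          prob μ (fun ω => (f ∘ X) ω = y ∧ I ω = i)
            = prob μ (fun ω => (f ∘ X) ω = y) * prob μ (fun ω => I ω = i)) := by
    constructor
    · intro hpar y i
      obtain ⟨i₀, hi₀⟩ : ∃ i₀, 0 < prob μ (fun ω => I ω = i₀) := by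
        by_contra h
        push_neg at h
        have : ∑ i : β, prob μ (fun ω => I ω = i) = 0 :=
          Finset.sum_eq_zero fun i _ => le_antisymm (h i) (hnn _)
        rw [hIsum] at this; norm_num at this
      set c := condProb μ (fun ω => (f ∘ X) ω = y) (fun ω => I ω = i₀) with hc
      have hall : ∀ j : β, prob μ (fun ω => (f ∘ X) ω = y ∧ I ω = j)
          = c * prob μ (fun ω => I ω = j) := by
        intro j
        by_cases hj : 0 < prob μ (fun ω => I ω = j)
        · have h := hpar y j i₀ hj hi₀
          rw [condProb, ← hc] at h
          exact (div_eq_iff (ne_of_gt hj)).mp h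
        · have hj0 : prob μ (fun ω => I ω = j) = 0 :=
            le_antisymm (not_lt.mp hj) (hnn _)
          have : prob μ (fun ω => (f ∘ X) ω = y ∧ I ω = j) = 0 :=
            le_antisymm (hj0 ▸ prob_and_le' μ hμ0 _ _) (hnn _)
          rw [this, hj0, mul_zero]
      have hYc : prob μ (fun ω => (f ∘ X) ω = y) = c := by
        rw [← prob_fiber' μ (fun ω => (f ∘ X) ω = y) I]
        rw [Finset.sum_congr rfl fun j _ => hall j, ← Finset.mul_sum, hIsum, mul_one]
      rw [hall i, hYc]
    · intro hind y i₁ i₂ h1 h2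
      simp only [condProb, hind y i₁, hind y i₂]
      rw [mul_div_assoc, mul_div_assoc, div_self (ne_of_gt h1), div_self (ne_of_gt h2)]
  refine ⟨fun y x _ => rfl, key, ?_⟩
  intro hnind
  have := mt key.mp hnind
  push_neg at this
  obtain ⟨y, i₁, i₂, h1, h2, hne⟩ := this
  exact ⟨y, i₁, i₂, h1, h2, hne⟩
end
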